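/- Pick integers u > r > 0 and a ∈ F_q^*. Write s := gcd(u−r, q−1) and d := (q−1)/s. Suppose that for every η ∈ μ_{2d} (in a fixed algebraic closure of F_q), the element η + a/η lies in μ_s. Then x^u + a·x^r is a permutation polynomial of F_q if and only if −a ∉ μ_d, gcd(r, s) = 1, and gcd(2d, u+r) ≤ 2. -/

import Mathlib

open Polynomial

theorem stmt_6 {F : Type*} [Field F] [Fintype F] {q : ℕ} (hq : Fintype.card F = q)
    {u r : ℕ} (hru : r < u) (hr : 0 < r) (a : F) (ha : a ≠ 0)
    (s d : ℕ) (hs : s = Nat.gcd (u - r) (q - 1)) (hd : d = (q - 1) / s)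
    (hyp : ∀ η : AlgebraicClosure F, η ^ (2 * d) = 1 →
      (η + algebraMap F (AlgebraicClosure F) a / η) ^ s = 1) :
    Function.Bijective (fun c : F => (X ^ u + C a * X ^ r).eval c) ↔
      ((-a) ^ d ≠ 1 ∧ Nat.gcd r s = 1 ∧ Nat.gcd (2 * d) (u + r) ≤ 2) := by
  have hq2 : 2 ≤ q := hq ▸ Fintype.one_lt_card
  set K := AlgebraicClosure F
  set φ : F →+* K := (algebraMap F K : F →+* K) with hφdef
  have hφ : Function.Injective φ := φ.injective
  have hn : 0 < q - 1 := by omega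
  have hur : 0 < u - r := by omega
  have hs0 : 0 < s := hs ▸ Nat.gcd_pos_of_pos_left _ hur
  have hsdvd : s ∣ q - 1 := hs ▸ Nat.gcd_dvd_right _ _
  have hsd : s * d = q - 1 := by rw [hd]; exact Nat.mul_div_cancel' hsdvd
  have hd0 : 0 < d := by
    rcases Nat.eq_zero_or_pos d with h | h
    · rw [h, mul_zero] at hsd; omega
    · exact h
  set m := (u - r) / s with hm'
  have hm : s * m = u - r := Nat.mul_div_cancel' (hs ▸ Nat.gcd_dvd_left _ _)
  have hm0 : 0 < m := by
    rcases Nat.eq_zero_or_pos m with h | h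
    · rw [h, mul_zero] at hm; omega
    · exact h
  have hcop : Nat.Coprime m d := by
    rw [hm', hd, hs]
    exact Nat.coprime_div_gcd_div_gcd (hs ▸ hs0)
  have hpow : ∀ x : F, x ≠ 0 → x ^ (q - 1) = 1 := fun x hx =>
    hq ▸ FiniteField.pow_card_sub_one_eq_one x hx
  classical
  -- parity lemma
  have hP : (-1 : K) ^ s = 1 := by
    have h1 := hyp 1 (one_pow _)
    have h2 := hyp (-1) (by rw [pow_mul]; simp)
    simp only [div_one] at h1
    have he : (-1 + φ a / (-1) : K) = -(1 + φ a) := by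
      rw [div_neg, div_one]; ring
    rw [he, neg_pow, h1, mul_one] at h2
    exact h2
  -- the key computational lemma
  have L1 : ∀ (y : F) (η : K), y ^ d = 1 → η ^ 2 = φ y →
      y ^ m + a ≠ 0 ∧ φ (y ^ r * (y ^ m + a) ^ s) = η ^ (u + r) ∧
        (y ^ r * (y ^ m + a) ^ s) ^ d = 1 := by
    intro y η hy hη
    have hy0 : y ≠ 0 := by rintro rfl; rw [zero_pow hd0.ne'] at hy; exact zero_ne_one hy
    have hη0 : η ≠ 0 := by
      rintro rfl
      rw [show ((0:K) ^ 2) = 0 by ring] at hη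
      exact hy0 (hφ (by rw [← hη, map_zero]))
    have hη2d : η ^ (2 * d) = 1 := by rw [pow_mul, hη, ← map_pow, hy, map_one]
    have hβ2d : (η ^ m) ^ (2 * d) = 1 := by rw [← pow_mul, mul_comm m, pow_mul, hη2d, one_pow]
    have hσ := hyp (η ^ m) hβ2d
    set σ : K := η ^ m + φ a / η ^ m with hσdef
    have hσ0 : σ ≠ 0 := by
      intro h; rw [h, zero_pow hs0.ne'] at hσ; exact zero_ne_one hσ
    have hβ0 : (η : K) ^ m ≠ 0 := pow_ne_zero _ hη0
    have hfac : φ (y ^ m + a) = η ^ m * σ := by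
      rw [hσdef, mul_add, mul_div_cancel₀ _ hβ0, map_add, map_pow, ← hη, ← pow_mul,
        ← pow_add]
      ring_nf
    have h1 : y ^ m + a ≠ 0 := by
      intro h; rw [h, map_zero] at hfac
      exact mul_ne_zero hβ0 hσ0 hfac.symm
    have hval : φ (y ^ r * (y ^ m + a) ^ s) = η ^ (u + r) := by
      rw [map_mul, map_pow, map_pow, hfac, ← hη, ← pow_mul, mul_pow, ← pow_mul, hσ,
        mul_one, ← pow_add]
      congr 1
      have hm2 : m * s = u - r := by rw [mul_comm]; exact hm
      omega
    have hηd2 : (η ^ d) ^ 2 = 1 := by rw [← pow_mul, mul_comm, hη2d]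
    have hηsd : η ^ (s * d) = 1 := by
      rcases sq_eq_one_iff.mp hηd2 with h | h
      · rw [mul_comm, pow_mul, h, one_pow]
      · rw [mul_comm, pow_mul, h, hP]
    have hud : (η ^ (u + r)) ^ d = 1 := by
      rw [← pow_mul, show (u + r) * d = (s * d) * m + (2 * d) * r by
        have : u + r = s * m + 2 * r := by omega
        rw [this]; ring, pow_add, pow_mul, hηsd, one_pow, one_mul, pow_mul, hη2d,
        one_pow]
    refine ⟨h1, hval, ?_⟩
    apply hφ
    rw [map_pow, hval, map_one, hud]
  have hfeq : (fun c : F => (X ^ u + C a * X ^ r).eval c)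
      = fun c : F => c ^ u + a * c ^ r := by
    funext c; simp
  have L2 : ∀ x : F, x ^ u + a * x ^ r = x ^ r * ((x ^ s) ^ m + a) := by
    intro x
    rw [show u = r + s * m by omega, pow_add, pow_mul]
    ring
  have L2s : ∀ x : F, (x ^ u + a * x ^ r) ^ s
      = (x ^ s) ^ r * (((x ^ s)) ^ m + a) ^ s := by
    intro x
    rw [L2 x, mul_pow, pow_right_comm]
  -- (-a)^d ≠ 1 follows from hyp (via L1)
  have hA : (-a : F) ^ d ≠ 1 := by
    intro hcon
    obtain ⟨y, hy1, hy2⟩ : ∃ y : F, y ^ d = 1 ∧ y ^ m = -a := by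
      by_cases hd1 : d = 1
      · refine ⟨1, one_pow _, ?_⟩
        rw [hd1, pow_one] at hcon
        rw [one_pow, hcon]
      · have htot := Nat.ModEq.pow_totient hcop
        have ht0 : 0 < Nat.totient d := Nat.totient_pos.mpr hd0
        set c := m ^ (Nat.totient d - 1) with hc
        have hcm : c * m = m ^ Nat.totient d := by
          rw [hc, ← pow_succ]
          congr 1
          omega
        have hmod : m ^ Nat.totient d % d = 1 := by
          have := htot
          unfold Nat.ModEq at this
          rw [this, Nat.mod_eq_of_lt (by omega)]
        obtain ⟨k, hk⟩ : ∃ k, m ^ Nat.totient d = d * k + 1 :=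
          ⟨m ^ Nat.totient d / d, by have := Nat.div_add_mod (m ^ Nat.totient d) d; omega⟩
        refine ⟨(-a) ^ c, ?_, ?_⟩
        · rw [← pow_mul, mul_comm, pow_mul, hcon, one_pow]
        · rw [← pow_mul, hcm, hk, pow_add, pow_mul, hcon, one_pow, pow_one, one_mul]
    obtain ⟨η, hη⟩ := IsAlgClosed.exists_pow_nat_eq (φ y) (by norm_num : (0:ℕ) < 2)
    obtain ⟨h1, -, -⟩ := L1 y η hy1 hη
    rw [hy2, neg_add_cancel] at h1
    exact h1 rfl
  -- surjectivity of pow s onto μ_d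
  have L4 : ∀ y : F, y ^ d = 1 → ∃ x : F, x ≠ 0 ∧ x ^ s = y := by
    classical
    intro y hy
    have hy0 : y ≠ 0 := by rintro rfl; rw [zero_pow hd0.ne'] at hy; exact zero_ne_one hy
    obtain ⟨g, hg⟩ := IsCyclic.exists_generator (α := Fˣ)
    have hog : orderOf g = q - 1 := by
      rw [orderOf_eq_card_of_forall_mem_zpowers hg, Nat.card_eq_fintype_card,
        Fintype.card_units, hq]
    obtain ⟨k, hk0⟩ := hg (Units.mk0 y hy0)
    have hk : g ^ k = Units.mk0 y hy0 := hk0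
    have hkd : g ^ (k * (d : ℤ)) = 1 := by
      rw [zpow_mul, hk]
      norm_cast
      apply Units.ext
      push_cast
      exact hy
    have hdvd : ((q - 1 : ℕ) : ℤ) ∣ k * d := by
      rw [← hog]; exact orderOf_dvd_iff_zpow_eq_one.mpr hkd
    obtain ⟨c, hc⟩ : (s : ℤ) ∣ k := by
      obtain ⟨t, ht⟩ := hdvd
      refine ⟨t, ?_⟩
      have hd' : (d : ℤ) ≠ 0 := by exact_mod_cast hd0.ne'
      have hq1 : ((q - 1 : ℕ) : ℤ) = (s : ℤ) * (d : ℤ) := by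
        rw [← hsd]; push_cast; ring
      have h2 : k * d = s * t * d := by rw [ht, hq1]; ring
      exact mul_right_cancel₀ hd' h2
    refine ⟨((g ^ c : Fˣ) : F), Units.ne_zero _, ?_⟩
    have : ((g ^ c) ^ (s : ℕ) : Fˣ) = Units.mk0 y hy0 := by
      rw [← zpow_natCast, ← zpow_mul, mul_comm, ← hc, hk]
    calc ((g ^ c : Fˣ) : F) ^ s = (((g ^ c) ^ (s : ℕ) : Fˣ) : F) := by push_cast; ring
    _ = y := by rw [this]; rfl
  rw [hfeq]
  constructor
  · intro hbij
    have hBC : Nat.gcd r s = 1 ∧ Nat.gcd (2 * d) (u + r) ≤ 2 := by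
      constructor
      · -- gcd r s = 1
        set g0 := Nat.gcd r s with hg0
        have hg0s : g0 ∣ s := Nat.gcd_dvd_right _ _
        have hg00 : 0 < g0 := Nat.gcd_pos_of_pos_left _ hr
        have claim : ∀ ε : F, ε ^ s = 1 → ε ^ r = 1 → ε = 1 := by
          intro ε h1 h2
          have hε' : ε ^ u = ε ^ r := by
            rw [show u = r + s * m by omega, pow_add, pow_mul, h1, one_pow, mul_one]
          have : ε ^ u + a * ε ^ r = 1 ^ u + a * 1 ^ r := by
            rw [hε', h2]; simp
          exact hbij.1 this
        obtain ⟨g, hg⟩ := IsCyclic.exists_generator (α := Fˣ)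
        have hog : orderOf g = q - 1 := by
          rw [orderOf_eq_card_of_forall_mem_zpowers hg, Nat.card_eq_fintype_card,
            Fintype.card_units, hq]
        set ε : Fˣ := g ^ d with hε
        have hoε : orderOf ε = s := by
          rw [hε, orderOf_pow, hog, ← hsd, Nat.gcd_eq_right ⟨s, by ring⟩,
            Nat.mul_div_cancel _ hd0]
        have hεs : ε ^ s = 1 := by rw [← hoε]; exact pow_orderOf_eq_one ε
        have key : ((ε ^ (s / g0) : Fˣ) : F) = 1 := by
          apply claim
          · rw [← Units.val_pow_eq_pow_val, pow_right_comm, hεs, one_pow, Units.val_one]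
          · obtain ⟨r', hr'⟩ := (Nat.gcd_dvd_left r s : g0 ∣ r)
            rw [← Units.val_pow_eq_pow_val, ← pow_mul,
              show s / g0 * r = s * r' by rw [hr', ← mul_assoc, Nat.div_mul_cancel hg0s],
              pow_mul, hεs, one_pow, Units.val_one]
        have hεu : ε ^ (s / g0) = 1 := Units.ext (by rw [Units.val_one]; exact key)
        have h1 : s ∣ s / g0 := by
          have := orderOf_dvd_of_pow_eq_one hεu
          rwa [hoε] at this
        have h2 : s / g0 ∣ s := Nat.div_dvd_of_dvd hg0s
        have h3 : s / g0 = s := Nat.dvd_antisymm h2 h1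
        have h4 : s / g0 * g0 = s := Nat.div_mul_cancel hg0s
        rw [h3] at h4
        exact Nat.eq_of_mul_eq_mul_left hs0 (by rw [h4, mul_one] : s * g0 = s * 1)
      · -- gcd (2d) (u+r) ≤ 2
        by_contra hc
        push_neg at hc
        set e := Nat.gcd (2 * d) (u + r) with he
        have he3 : 3 ≤ e := hc
        have he2d : e ∣ 2 * d := Nat.gcd_dvd_left _ _
        have heur : e ∣ u + r := Nat.gcd_dvd_right _ _
        have hddvd : d ∣ q - 1 := ⟨s, by rw [← hsd]; ring⟩
        obtain ⟨w, t, hw1, hwd, ht2, htur⟩ : ∃ (w : F) (t : K), w ≠ 1 ∧ w ^ d = 1 ∧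
            t ^ 2 = φ w ∧ t ^ (u + r) = 1 := by
          obtain ⟨k, o, ho2, hko⟩ := Nat.exists_eq_pow_mul_and_not_dvd
            (show e ≠ 0 by omega) 2 (by norm_num)
          by_cases ho : o = 1
          · -- e is a power of 2, hence 4 ∣ e
            rw [ho, mul_one] at hko
            have hk2 : 2 ≤ k := by
              by_contra hk
              push_neg at hk
              interval_cases k
              · rw [pow_zero] at hko; omega
              · rw [pow_one] at hko; omega
            have h4e : 4 ∣ e := by
              rw [hko, show (4:ℕ) = 2 ^ 2 by norm_num]
              exact pow_dvd_pow 2 hk2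
            have h2d : 2 ∣ d := by
              have h42d : 4 ∣ 2 * d := h4e.trans he2d
              omega
            have h4ur : 4 ∣ u + r := h4e.trans heur
            have hcard_odd : q % 2 = 1 := by
              have h2q : 2 ∣ q - 1 := h2d.trans hddvd
              omega
            have hne11 : (-1 : F) ≠ 1 := by
              intro hcon
              have h2z : ((2 : ℕ) : F) = 0 := by
                push_cast
                linear_combination (-1 : F) * hcon
              have hdvd2 : ringChar F ∣ 2 := ringChar.dvd h2z
              have hchar2 : ringChar F = 2 := by
                rcases (Nat.prime_two).eq_one_or_self_of_dvd _ hdvd2 with h | h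
                · exact absurd h CharP.ringChar_ne_one
                · exact h
              have := FiniteField.even_card_of_char_two hchar2
              omega
            obtain ⟨i, hi⟩ := IsAlgClosed.exists_pow_nat_eq (-1 : K) (by norm_num : (0:ℕ) < 2)
            refine ⟨-1, i, hne11, Even.neg_one_pow ⟨d / 2, by omega⟩, by
              rw [hi, map_neg, map_one], ?_⟩
            obtain ⟨c4, hc4⟩ := h4ur
            rw [hc4, show 4 * c4 = 2 * (2 * c4) by ring, pow_mul, hi]
            exact Even.neg_one_pow ⟨c4, by ring⟩
          · -- odd prime factor
            set ℓ := o.minFac with hℓ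
            have ho0 : o ≠ 0 := by rintro rfl; rw [mul_zero] at hko; omega
            have hℓp : ℓ.Prime := Nat.minFac_prime ho
            have hℓo : ℓ ∣ o := Nat.minFac_dvd o
            have hℓe : ℓ ∣ e := hℓo.trans ⟨2 ^ k, by rw [hko]; ring⟩
            have hℓ2 : ℓ ≠ 2 := by
              intro hcon
              exact ho2 (hcon ▸ hℓo)
            have hℓd : ℓ ∣ d := by
              have hl2d : ℓ ∣ d * 2 := by rw [mul_comm]; exact hℓe.trans he2d
              exact Nat.Coprime.dvd_of_dvd_mul_right
                ((Nat.coprime_primes hℓp Nat.prime_two).mpr hℓ2) hl2d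
            have hℓcard : ℓ ∣ Fintype.card Fˣ := by
              rw [Fintype.card_units, hq]
              exact hℓd.trans hddvd
            haveI : Fact ℓ.Prime := ⟨hℓp⟩
            obtain ⟨ε, hε⟩ := exists_prime_orderOf_dvd_card ℓ hℓcard
            have hεℓ : ε ^ ℓ = 1 := by rw [← hε]; exact pow_orderOf_eq_one ε
            have ht0ℓ : ((ε : F)) ^ ℓ = 1 := by
              rw [← Units.val_pow_eq_pow_val, hεℓ, Units.val_one]
            refine ⟨(ε : F) ^ 2, φ ((ε : F)), ?_, ?_, by rw [map_pow], ?_⟩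
            · intro hcon
              have hε2 : ε ^ 2 = 1 := Units.ext (by
                rw [Units.val_pow_eq_pow_val, Units.val_one]; exact hcon)
              have hdvd : ℓ ∣ 2 := hε ▸ orderOf_dvd_of_pow_eq_one hε2
              rcases (Nat.prime_two).eq_one_or_self_of_dvd _ hdvd with h | h
              · exact hℓp.one_lt.ne' h
              · exact hℓ2 h
            · obtain ⟨d', hd'⟩ := hℓd
              rw [← pow_mul, hd', show 2 * (ℓ * d') = ℓ * (2 * d') by ring, pow_mul,
                ht0ℓ, one_pow]
            · obtain ⟨c', hc'⟩ := hℓe.trans heur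
              rw [← map_pow, hc', pow_mul, ht0ℓ, one_pow, map_one]
        -- now derive a contradiction using injectivity of y ↦ y^r (y^m+a)^s on μ_d
        have hsurj : ∀ z : F, z ^ d = 1 → ∃ y : F, y ^ d = 1 ∧ y ^ r * (y ^ m + a) ^ s = z := by
          intro z hz
          obtain ⟨x0, hx00, hx0⟩ := L4 z hz
          obtain ⟨x, hx⟩ := hbij.2 x0
          simp only at hx
          have hx0' : x ≠ 0 := by
            rintro rfl
            rw [zero_pow (by omega : u ≠ 0), zero_pow hr.ne', mul_zero, add_zero] at hx
            exact hx00 hx.symm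
          refine ⟨x ^ s, by rw [← pow_mul, hsd]; exact hpow x hx0', ?_⟩
          rw [← L2s, hx, hx0]
        let S := {y : F // y ^ d = 1}
        let T : S → S := fun y => ⟨y.1 ^ r * (y.1 ^ m + a) ^ s, by
          obtain ⟨η, hη⟩ := IsAlgClosed.exists_pow_nat_eq (φ y.1) (by norm_num : (0:ℕ) < 2)
          exact (L1 y.1 η y.2 hη).2.2⟩
        have hTsurj : Function.Surjective T := by
          rintro ⟨z, hz⟩
          obtain ⟨y, hy, hyz⟩ := hsurj z hz
          exact ⟨⟨y, hy⟩, Subtype.ext hyz⟩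
        have hTinj : Function.Injective T := Finite.injective_iff_surjective.mpr hTsurj
        have hgw : w ^ r * (w ^ m + a) ^ s = 1 := by
          obtain ⟨-, hval, -⟩ := L1 w t hwd ht2
          apply hφ
          rw [hval, htur, map_one]
        have hg1 : (1 : F) ^ r * ((1 : F) ^ m + a) ^ s = 1 := by
          obtain ⟨-, hval, -⟩ := L1 1 1 (one_pow d) (by rw [map_one, one_pow])
          apply hφ
          rw [hval, one_pow, map_one]
        have : (⟨w, hwd⟩ : S) = ⟨1, one_pow d⟩ :=
          hTinj (Subtype.ext (by simp only [T]; rw [hgw, hg1]))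
        exact hw1 (congrArg Subtype.val this)
    exact ⟨hA, hBC.1, hBC.2⟩
  · rintro ⟨-, hB, hC⟩
    apply Finite.injective_iff_bijective.mp
    have hsde : ∀ x : F, x ≠ 0 → (x ^ s) ^ d = 1 := by
      intro x hx; rw [← pow_mul, hsd]; exact hpow x hx
    have hnz : ∀ z : F, z ≠ 0 → z ^ u + a * z ^ r ≠ 0 := by
      intro z hz
      obtain ⟨η, hη⟩ := IsAlgClosed.exists_pow_nat_eq (φ (z ^ s)) (by norm_num : (0:ℕ) < 2)
      obtain ⟨hne, -, -⟩ := L1 (z ^ s) η (hsde z hz) hη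
      rw [L2 z]
      exact mul_ne_zero (pow_ne_zero _ hz) hne
    intro x x' hxx'
    simp only at hxx'
    by_cases hx : x = 0
    · subst hx
      by_contra hne
      have hx'0 : x' ≠ 0 := fun h => hne h.symm
      apply hnz x' hx'0
      rw [← hxx', zero_pow (by omega : u ≠ 0), zero_pow hr.ne', mul_zero, add_zero]
    · have hx'0 : x' ≠ 0 := by
        rintro rfl
        apply hnz x hx
        rw [hxx', zero_pow (by omega : u ≠ 0), zero_pow hr.ne', mul_zero, add_zero]
      obtain ⟨η, hη⟩ := IsAlgClosed.exists_pow_nat_eq (φ (x ^ s)) (by norm_num : (0:ℕ) < 2)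
      obtain ⟨η', hη'⟩ := IsAlgClosed.exists_pow_nat_eq (φ (x' ^ s)) (by norm_num : (0:ℕ) < 2)
      obtain ⟨hne, hval, -⟩ := L1 (x ^ s) η (hsde x hx) hη
      obtain ⟨hne', hval', -⟩ := L1 (x' ^ s) η' (hsde x' hx'0) hη'
      have hη'0 : η' ≠ 0 := by
        intro h; rw [h, show ((0:K) ^ 2) = 0 by ring] at hη'
        exact pow_ne_zero s hx'0 (hφ (by rw [← hη', map_zero]))
      have hη0 : η ≠ 0 := by
        intro h; rw [h, show ((0:K) ^ 2) = 0 by ring] at hη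
        exact pow_ne_zero s hx (hφ (by rw [← hη, map_zero]))
      have hval2 : η ^ (u + r) = η' ^ (u + r) := by
        rw [← hval, ← hval']
        congr 1
        rw [← L2s, ← L2s, hxx']
      have hη2d : η ^ (2 * d) = 1 := by
        rw [pow_mul, hη, ← map_pow, hsde x hx, map_one]
      have hη'2d : η' ^ (2 * d) = 1 := by
        rw [pow_mul, hη', ← map_pow, hsde x' hx'0, map_one]
      set τ : K := η / η' with hτ
      have hτ1 : τ ^ (2 * d) = 1 := by rw [hτ, div_pow, hη2d, hη'2d]; norm_num
      have hτ2 : τ ^ (u + r) = 1 := by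
        rw [hτ, div_pow, ← hval2, div_self (pow_ne_zero _ hη0)]
      have hτo : orderOf τ ∣ Nat.gcd (2 * d) (u + r) :=
        Nat.dvd_gcd (orderOf_dvd_of_pow_eq_one hτ1) (orderOf_dvd_of_pow_eq_one hτ2)
      have hgcd2 : Nat.gcd (2 * d) (u + r) ∣ 2 := by
        have hpos : 0 < Nat.gcd (2 * d) (u + r) := Nat.gcd_pos_of_pos_left _ (by omega)
        interval_cases h : Nat.gcd (2 * d) (u + r) <;> norm_num
      have hτsq : τ ^ 2 = 1 :=
        orderOf_dvd_iff_pow_eq_one.mp (hτo.trans hgcd2)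
      have hηη : η ^ 2 = η' ^ 2 := by
        rw [hτ, div_pow] at hτsq
        rw [div_eq_one_iff_eq (pow_ne_zero _ hη'0)] at hτsq
        exact hτsq
      have hxs : x ^ s = x' ^ s := hφ (by rw [← hη, ← hη', hηη])
      have hxr : x ^ r = x' ^ r := by
        have h1 : x ^ r * ((x' ^ s) ^ m + a) = x' ^ r * ((x' ^ s) ^ m + a) := by
          calc x ^ r * ((x' ^ s) ^ m + a) = x ^ r * ((x ^ s) ^ m + a) := by rw [hxs]
            _ = x' ^ r * ((x' ^ s) ^ m + a) := by rw [← L2, ← L2, hxx']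
        exact mul_right_cancel₀ hne' h1
      have hw1 : (x / x') ^ r = 1 := by rw [div_pow, hxr, div_self (pow_ne_zero _ hx'0)]
      have hw2 : (x / x') ^ s = 1 := by rw [div_pow, hxs, div_self (pow_ne_zero _ hx'0)]
      have : orderOf (x / x') ∣ 1 := by
        rw [← hB]
        exact Nat.dvd_gcd (orderOf_dvd_of_pow_eq_one hw1) (orderOf_dvd_of_pow_eq_one hw2)
      have hxq : x / x' = 1 := orderOf_eq_one_iff.mp (Nat.dvd_one.mp this)
      exact (div_eq_one_iff_eq hx'0).mp hxq
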